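/- Let c : ℕ → ℝ be defined by c(n) = 0 for n ≤ 3 and, for n ≥ 4, c(n) = c(⌊n/2⌋) + c(⌊n/2⌋ − 1) + (3/2)·n + (1/2)·(n mod 2). Then c is strictly increasing on {n : n ≥ 3}, i.e., c(n+1) > c(n) for all n ≥ 3. -/
import Mathlib


/-- The Timsort worst-case merge cost `c(n)` is strictly increasing for `n ≥ 3`. -/
theorem timsort_cost_strict_mono (c : ℕ → ℝ)
    (h0 : ∀ n ≤ 3, c n = 0)
    (hrec : ∀ n, 4 ≤ n →
      c n = c (n / 2) + c (n / 2 - 1) + 3 / 2 * (n : ℝ) + 1 / 2 * ((n % 2 : ℕ) : ℝ)) :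
    ∀ n, 3 ≤ n → c n < c (n + 1) := by
  intro n
  induction n using Nat.strong_induction_on with
  | _ n ih =>
    intro hn
    obtain ⟨m, rfl | rfl⟩ := Nat.even_or_odd' n
    · -- n = 2*m, even, so 2*m ≥ 4
      have hm : 2 ≤ m := by omega
      have h1 := hrec (2*m) (by omega)
      have h2 := hrec (2*m+1) (by omega)
      have e1 : (2*m)/2 = m := by omega
      have e2 : (2*m+1)/2 = m := by omega
      have e3 : (2*m) % 2 = 0 := by omega
      have e4 : (2*m+1) % 2 = 1 := by omega
      rw [e1, e3] at h1
      rw [e2, e4] at h2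
      push_cast at h1 h2 ⊢
      linarith
    · -- n = 2*m+1, odd
      rcases Nat.lt_or_ge m 4 with hm | hm
      · have hm1 : 1 ≤ m := by omega
        interval_cases m
        · -- n = 3
          have h4 := hrec 4 (by omega)
          norm_num [h0 1 (by omega), h0 2 (by omega), h0 3 (by omega)] at h4 ⊢
          linarith
        · -- n = 5
          have h5 := hrec 5 (by omega)
          have h6 := hrec 6 (by omega)
          norm_num [h0 1 (by omega), h0 2 (by omega), h0 3 (by omega)] at h5 h6 ⊢
          linarith
        · -- n = 7
          have h4 := hrec 4 (by omega)
          have h7 := hrec 7 (by omega)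
          have h8 := hrec 8 (by omega)
          norm_num [h0 1 (by omega), h0 2 (by omega), h0 3 (by omega)] at h4 h7 h8 ⊢
          linarith
      · -- m ≥ 4
        have h1 := hrec (2*m+1) (by omega)
        have h2 := hrec (2*m+2) (by omega)
        have e1 : (2*m+1)/2 = m := by omega
        have e2 : (2*m+2)/2 = m+1 := by omega
        have e3 : (2*m+1) % 2 = 1 := by omega
        have e4 : (2*m+2) % 2 = 0 := by omega
        have e5 : m + 1 - 1 = m := by omega
        rw [e1, e3] at h1
        rw [e2, e4, e5] at h2
        have ha := ih (m-1) (by omega) (by omega)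
        have hb := ih m (by omega) (by omega)
        have em : m - 1 + 1 = m := by omega
        rw [em] at ha
        push_cast at h1 h2 ⊢
        linarith
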